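/- Let H=(V,E) be a finite simple 4-regular graph with |V| ≥ 5 such that |∂S| ≥ 4 for every nonempty S ⊊ V and |∂S| ≥ 6 for every proper subset S (1 < |S| < |V|−1), and assume H is not isomorphic to the complete graph K_5. Fix r ∈ V and form the bipartization H'=(B,F): B := ∂r, F := E ∖ ∂r, and e ∈ B is adjacent to f ∈ F if and only if the endpoint of e other than r is an endpoint of f. Then for every R ⊆ B, |N(R)| ≥ 2|R|, where N(R) is the set of vertices of F adjacent in H' to some vertex of R; equivalently, condition (Hall cond) holds with b_u = 1 for all u ∈ B and c = 1/2. -/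

import Mathlib

open Set

private lemma sym2_eq_of_two_mem {V : Type*} {f : Sym2 V} {p q : V}
    (hp : p ∈ f) (hq : q ∈ f) (hpq : p ≠ q) : f = s(p, q) := by
  induction f with
  | _ x y =>
    rw [Sym2.mem_iff] at hp hq
    rcases hp with rfl | rfl <;> rcases hq with rfl | rfl
    · exact (hpq rfl).elim
    · rfl
    · exact Sym2.eq_swap
    · exact (hpq rfl).elim

private lemma ncard4 {α : Type*} {a b c d : α} (hab : a ≠ b) (hac : a ≠ c) (had : a ≠ d)
    (hbc : b ≠ c) (hbd : b ≠ d) (hcd : c ≠ d) : ({a, b, c, d} : Set α).ncard = 4 := by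
  rw [Set.ncard_insert_of_notMem (by simp [hab, hac, had]) (Set.toFinite _),
    Set.ncard_insert_of_notMem (by simp [hbc, hbd]) (Set.toFinite _),
    Set.ncard_pair hcd]

private lemma ncard_eq_four {α : Type*} {s : Set α} (h : s.ncard = 4) (hs : s.Finite) :
    ∃ a b c d, a ≠ b ∧ a ≠ c ∧ a ≠ d ∧ b ≠ c ∧ b ≠ d ∧ c ≠ d ∧ s = {a, b, c, d} := by
  obtain ⟨a, ha⟩ : s.Nonempty := by
    rw [← Set.ncard_pos hs] at *; omega
  have h3 : (s \ {a}).ncard = 3 := by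
    rw [Set.ncard_diff_singleton_of_mem ha, h]
  obtain ⟨b, c, d, hbc, hbd, hcd, hdiff⟩ := Set.ncard_eq_three.mp h3
  have hab : a ∉ ({b, c, d} : Set α) := by
    rw [← hdiff]; simp
  simp only [Set.mem_insert_iff, Set.mem_singleton_iff, not_or] at hab
  refine ⟨a, b, c, d, hab.1, hab.2.1, hab.2.2, hbc, hbd, hcd, ?_⟩
  rw [show ({a, b, c, d} : Set α) = insert a (s \ {a}) by rw [hdiff],
    Set.insert_diff_singleton, Set.insert_eq_of_mem ha]

/-- Edges not through `r` containing `u`. -/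
private def Eu {V : Type*} (H : SimpleGraph V) (r u : V) : Set (Sym2 V) :=
  {f | f ∈ H.edgeSet ∧ r ∉ f ∧ u ∈ f}

private lemma Eu_ncard {V : Type*} [Fintype V] [DecidableEq V] (H : SimpleGraph V)
    [DecidableRel H.Adj] {r u : V} (hreg : H.degree u = 4) (h : H.Adj r u) :
    (Eu H r u).ncard = 3 := by
  have himg : Eu H r u = (fun w => s(u, w)) '' (H.neighborSet u \ {r}) := by
    ext f
    constructor
    · rintro ⟨hf, hrf, huf⟩
      refine ⟨Sym2.Mem.other huf, ⟨?_, ?_⟩, Sym2.other_spec huf⟩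
      · rw [SimpleGraph.mem_neighborSet, ← SimpleGraph.mem_edgeSet, Sym2.other_spec huf]
        exact hf
      · intro hr
        rw [Set.mem_singleton_iff] at hr
        apply hrf
        rw [← Sym2.other_spec huf, ← hr]
        exact Sym2.mem_mk_right _ _
    · rintro ⟨w, ⟨hw, hwr⟩, rfl⟩
      rw [Set.mem_singleton_iff] at hwr
      refine ⟨hw, ?_, Sym2.mem_mk_left _ _⟩
      rw [Sym2.mem_iff]
      push_neg
      exact ⟨h.ne, fun hrw => hwr hrw.symm⟩
  rw [himg, Set.ncard_image_of_injOn (fun w _ w' _ hww => Sym2.congr_right.mp hww),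
    Set.ncard_diff_singleton_of_mem (show r ∈ H.neighborSet u from h.symm)]
  have hcard : (H.neighborSet u).ncard = H.degree u := by
    rw [Set.ncard_eq_toFinset_card']
    rfl
  omega

private lemma Eu_inter_ncard_le {V : Type*} {H : SimpleGraph V} {r u v : V} (huv : u ≠ v) :
    (Eu H r u ∩ Eu H r v).ncard ≤ 1 := by
  have : Eu H r u ∩ Eu H r v ⊆ {s(u, v)} := by
    rintro f ⟨⟨hf, hrf, huf⟩, ⟨-, -, hvf⟩⟩
    exact sym2_eq_of_two_mem huf hvf huv
  calc (Eu H r u ∩ Eu H r v).ncard ≤ ({s(u,v)} : Set (Sym2 V)).ncard :=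
        Set.ncard_le_ncard this (Set.finite_singleton _)
    _ = 1 := Set.ncard_singleton _

private lemma adj_of_inter_nonempty {V : Type*} {H : SimpleGraph V} {r u v : V} (huv : u ≠ v)
    (h : (Eu H r u ∩ Eu H r v).Nonempty) : H.Adj u v := by
  obtain ⟨f, ⟨hf, -, huf⟩, ⟨-, -, hvf⟩⟩ := h
  rw [← SimpleGraph.mem_edgeSet, ← sym2_eq_of_two_mem huf hvf huv]
  exact hf

private lemma bonf3 {α : Type*} [Finite α] (A B C : Set α) :
    A.ncard + B.ncard + C.ncard ≤
      (A ∪ B ∪ C).ncard + ((A ∩ B).ncard + (A ∩ C).ncard + (B ∩ C).ncard) := by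
  have h1 := Set.ncard_union_add_ncard_inter (A ∪ B) C (Set.toFinite _) (Set.toFinite _)
  have h2 := Set.ncard_union_add_ncard_inter A B (Set.toFinite _) (Set.toFinite _)
  have h3 : ((A ∪ B) ∩ C).ncard ≤ (A ∩ C).ncard + (B ∩ C).ncard := by
    rw [Set.union_inter_distrib_right]
    exact Set.ncard_union_le _ _
  omega

private lemma bonf4 {α : Type*} [Finite α] (A B C D : Set α) :
    A.ncard + B.ncard + C.ncard + D.ncard ≤
      (A ∪ B ∪ C ∪ D).ncard + ((A ∩ B).ncard + (A ∩ C).ncard + (A ∩ D).ncard +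
        (B ∩ C).ncard + (B ∩ D).ncard + (C ∩ D).ncard) := by
  have h1 := Set.ncard_union_add_ncard_inter (A ∪ B ∪ C) D (Set.toFinite _) (Set.toFinite _)
  have h2 := bonf3 A B C
  have h3 : ((A ∪ B ∪ C) ∩ D).ncard ≤ (A ∩ D).ncard + (B ∩ D).ncard + (C ∩ D).ncard := by
    rw [Set.union_inter_distrib_right, Set.union_inter_distrib_right]
    calc (A ∩ D ∪ B ∩ D ∪ C ∩ D).ncard
        ≤ (A ∩ D ∪ B ∩ D).ncard + (C ∩ D).ncard :=
          Set.ncard_union_le _ _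
      _ ≤ (A ∩ D).ncard + (B ∩ D).ncard + (C ∩ D).ncard := by
          have := Set.ncard_union_le (A ∩ D) (B ∩ D)
          omega
  omega

/-- The cut `∂S` of a simple graph: the set of edges with exactly one endpoint in `S`. -/
def scut {V : Type*} (H : SimpleGraph V) (S : Set V) : Set (Sym2 V) :=
  {e | e ∈ H.edgeSet ∧ ∃ u v : V, e = s(u, v) ∧ u ∈ S ∧ v ∉ S}


private lemma ncard3 {α : Type*} {a b c : α} (hab : a ≠ b) (hac : a ≠ c) (hbc : b ≠ c) :
    ({a, b, c} : Set α).ncard = 3 := by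
  rw [Set.ncard_insert_of_notMem (by simp [hab, hac]) (Set.toFinite _), Set.ncard_pair hbc]

private lemma ncard5 {α : Type*} {a b c d e : α} (h1 : a ≠ b) (h2 : a ≠ c) (h3 : a ≠ d)
    (h4 : a ≠ e) (h5 : b ≠ c) (h6 : b ≠ d) (h7 : b ≠ e) (h8 : c ≠ d) (h9 : c ≠ e)
    (h10 : d ≠ e) : ({a, b, c, d, e} : Set α).ncard = 5 := by
  rw [Set.ncard_insert_of_notMem (by simp [h1, h2, h3, h4]) (Set.toFinite _),
    ncard4 h5 h6 h7 h8 h9 h10]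

/-- If the four distinct neighbors `x, y, z, w` of `r` span at least the five edges other
than possibly `xy`, we get a contradiction. -/
private lemma key {V : Type*} [Fintype V] [DecidableEq V] (H : SimpleGraph V)
    [DecidableRel H.Adj]
    (hreg : ∀ v : V, H.degree v = 4)
    (h4ec : ∀ S : Set V, S.Nonempty → S ≠ Set.univ → 4 ≤ (scut H S).ncard)
    (hK5 : ¬ Nonempty (H ≃g (⊤ : SimpleGraph (Fin 5))))
    (r x y z w : V)
    (hrx : H.Adj r x) (hry : H.Adj r y) (hrz : H.Adj r z) (hrw : H.Adj r w)
    (hxy : x ≠ y) (hxz : x ≠ z) (hxw : x ≠ w) (hyz : y ≠ z) (hyw : y ≠ w) (hzw : z ≠ w)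
    (axz : H.Adj x z) (axw : H.Adj x w) (ayz : H.Adj y z) (ayw : H.Adj y w)
    (azw : H.Adj z w) : False := by
  set S : Set V := {r, x, y, z, w} with hS
  have hrx' := hrx.ne; have hry' := hry.ne; have hrz' := hrz.ne; have hrw' := hrw.ne
  have hdeg : ∀ v : V, (H.neighborSet v).ncard = 4 := by
    intro v
    rw [Set.ncard_eq_toFinset_card']
    exact hreg v
  have hsatur : ∀ v : V, ∀ T : Set V, T ⊆ H.neighborSet v → T.ncard = 4 →
      H.neighborSet v = T := by
    intro v T hsub hT
    exact (Set.eq_of_subset_of_ncard_le hsub (by rw [hdeg v, hT]) (Set.toFinite _)).symm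
  have hNr : H.neighborSet r = {x, y, z, w} := by
    apply hsatur
    · rintro t (rfl | rfl | rfl | rfl) <;> assumption
    · exact ncard4 hxy hxz hxw hyz hyw hzw
  have hNz : H.neighborSet z = {r, x, y, w} := by
    apply hsatur
    · rintro t (rfl | rfl | rfl | rfl)
      exacts [hrz.symm, axz.symm, ayz.symm, azw]
    · exact ncard4 hrx' hry' hrw' hxy hxw hyw
  have hNw : H.neighborSet w = {r, x, y, z} := by
    apply hsatur
    · rintro t (rfl | rfl | rfl | rfl)
      exacts [hrw.symm, axw.symm, ayw.symm, azw.symm]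
    · exact ncard4 hrx' hry' hrz' hxy hxz hyz
  -- the half-cut at a vertex `p` with three known neighbors inside `S`
  have hhalf : ∀ p : V, p ∈ S → ({r, z, w} : Set V) ⊆ H.neighborSet p →
      {e ∈ scut H S | p ∈ e}.ncard ≤ 1 := by
    intro p hpS hsub
    have himg : {e ∈ scut H S | p ∈ e} ⊆ (fun t => s(p, t)) '' (H.neighborSet p \ S) := by
      rintro e ⟨⟨he, u, v, rfl, huS, hvS⟩, hpe⟩
      have hpu : p = u := by
        rcases Sym2.mem_iff.mp hpe with rfl | rfl
        · rfl
        · exact absurd hpS hvS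
      subst hpu
      exact ⟨v, ⟨(SimpleGraph.mem_edgeSet H).mp he, hvS⟩, rfl⟩
    have h1 : (H.neighborSet p \ S).ncard ≤ 1 := by
      have hsub2 : ({r, z, w} : Set V) ⊆ H.neighborSet p ∩ S := by
        intro t ht
        refine ⟨hsub ht, ?_⟩
        rcases ht with rfl | rfl | rfl
        · exact Set.mem_insert _ _
        · simp [hS]
        · simp [hS]
      have h3 : 3 ≤ (H.neighborSet p ∩ S).ncard := by
        rw [← ncard3 hrz' hrw' hzw]
        exact Set.ncard_le_ncard hsub2 (Set.toFinite _)
      have hdiff : (H.neighborSet p \ S).ncard =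
          (H.neighborSet p).ncard - (H.neighborSet p ∩ S).ncard := by
        rw [← Set.diff_self_inter]
        exact Set.ncard_diff Set.inter_subset_left (Set.toFinite _)
      rw [hdiff, hdeg p]
      omega
    calc {e ∈ scut H S | p ∈ e}.ncard
        ≤ ((fun t => s(p, t)) '' (H.neighborSet p \ S)).ncard :=
          Set.ncard_le_ncard himg (Set.toFinite _)
      _ ≤ (H.neighborSet p \ S).ncard := Set.ncard_image_le (Set.toFinite _)
      _ ≤ 1 := h1
  have hcutsub : scut H S ⊆ {e ∈ scut H S | x ∈ e} ∪ {e ∈ scut H S | y ∈ e} := by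
    rintro e he
    obtain ⟨hE, u, v, rfl, huS, hvS⟩ := he
    have hadj : H.Adj u v := (SimpleGraph.mem_edgeSet H).mp hE
    have hvmem : ∀ q : V, H.neighborSet q = {x, y, z, w} ∨ H.neighborSet q = {r, x, y, w} ∨
        H.neighborSet q = {r, x, y, z} → u = q → False := by
      rintro q hq rfl
      apply hvS
      have hv : v ∈ H.neighborSet u := hadj
      rcases hq with hq | hq | hq <;> rw [hq] at hv <;>
        rcases hv with rfl | rfl | rfl | rfl <;> simp [hS]
    rcases huS with rfl | rfl | rfl | rfl | rfl
    · exact absurd rfl (fun h => hvmem u (Or.inl hNr) h)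
    · exact Or.inl ⟨⟨hE, _, v, rfl, by simp [hS], hvS⟩, Sym2.mem_mk_left _ _⟩
    · exact Or.inr ⟨⟨hE, _, v, rfl, by simp [hS], hvS⟩, Sym2.mem_mk_left _ _⟩
    · exact absurd rfl (fun h => hvmem u (Or.inr (Or.inl hNz)) h)
    · exact absurd rfl (fun h => hvmem u (Or.inr (Or.inr hNw)) h)
  have hcut2 : (scut H S).ncard ≤ 2 := by
    have hx1 : {e ∈ scut H S | x ∈ e}.ncard ≤ 1 := by
      apply hhalf x (by simp [hS])
      rintro t (rfl | rfl | rfl)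
      exacts [hrx.symm, axz, axw]
    have hy1 : {e ∈ scut H S | y ∈ e}.ncard ≤ 1 := by
      apply hhalf y (by simp [hS])
      rintro t (rfl | rfl | rfl)
      exacts [hry.symm, ayz, ayw]
    calc (scut H S).ncard
        ≤ ({e ∈ scut H S | x ∈ e} ∪ {e ∈ scut H S | y ∈ e}).ncard :=
          Set.ncard_le_ncard hcutsub (Set.toFinite _)
      _ ≤ {e ∈ scut H S | x ∈ e}.ncard + {e ∈ scut H S | y ∈ e}.ncard :=
          Set.ncard_union_le _ _
      _ ≤ 2 := by omega
  by_cases hSuniv : S = Set.univ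
  · -- |V| = 5
    have hcard5 : Fintype.card V = 5 := by
      have := ncard5 hrx' hry' hrz' hrw' hxy hxz hxw hyz hyw hzw
      rw [← hS, hSuniv, Set.ncard_univ, Nat.card_eq_fintype_card] at this
      exact this
    have hmemS : ∀ t : V, t ∈ S := fun t => hSuniv ▸ Set.mem_univ t
    by_cases haxy : H.Adj x y
    · -- H is the complete graph on five vertices
      have hadj : ∀ a b : V, a ≠ b → H.Adj a b := by
        intro a b hab
        have ha := hmemS a
        have hb := hmemS b
        rw [hS] at ha hb
        rcases ha with rfl | rfl | rfl | rfl | rfl <;>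
          rcases hb with rfl | rfl | rfl | rfl | rfl <;>
          first
            | exact (hab rfl).elim
            | assumption
            | solve_by_elim [SimpleGraph.Adj.symm]
      apply hK5
      refine ⟨⟨Fintype.equivFinOfCardEq hcard5, ?_⟩⟩
      intro a b
      simp only [SimpleGraph.top_adj, ne_eq, EmbeddingLike.apply_eq_iff_eq]
      constructor
      · intro h
        exact hadj a b h
      · intro h
        exact h.ne
    · -- x is missing two potential neighbors, contradicting 4-regularity
      have hsub : H.neighborSet x ⊆ ({r, z, w} : Set V) := by
        intro t ht
        have htS := hmemS t
        rw [hS] at htS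
        have htx : t ≠ x := (SimpleGraph.Adj.symm ht).ne
        have hty : t ≠ y := by
          rintro rfl
          exact haxy ht
        rcases htS with rfl | rfl | rfl | rfl | rfl
        · exact Set.mem_insert _ _
        · exact (htx rfl).elim
        · exact (hty rfl).elim
        · simp
        · simp
      have h4 : (4 : ℕ) ≤ 3 := by
        calc (4 : ℕ) = (H.neighborSet x).ncard := (hdeg x).symm
          _ ≤ ({r, z, w} : Set V).ncard := Set.ncard_le_ncard hsub (Set.toFinite _)
          _ = 3 := ncard3 hrz' hrw' hzw
      omega
  · have := h4ec S ⟨r, Set.mem_insert _ _⟩ hSuniv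
    omega

/-- **Lemma 6.3, non-`K₅` case.** Let `H` be a finite simple 4-regular
graph on at least 5 vertices with `|∂S| ≥ 4` for every nonempty proper vertex subset and
`|∂S| ≥ 6` for every proper cut, not isomorphic to `K₅`. Fix `r` and form the
bipartization: `B` is the set of edges incident to `r`, `F` the set of edges not
incident to `r`, and `e ∈ B` is adjacent to `f ∈ F` iff the endpoint of `e` other than
`r` is an endpoint of `f`. Then `|N(R)| ≥ 2|R|` for every `R ⊆ B`. -/
theorem stmt10 {V : Type*} [Fintype V] [DecidableEq V]
    (H : SimpleGraph V) [DecidableRel H.Adj]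
    (hV : 5 ≤ Fintype.card V)
    (hreg : ∀ v : V, H.degree v = 4)
    (h4ec : ∀ S : Set V, S.Nonempty → S ≠ Set.univ → 4 ≤ (scut H S).ncard)
    (h6 : ∀ S : Set V, 1 < S.ncard → S.ncard < Fintype.card V - 1 →
      6 ≤ (scut H S).ncard)
    (hK5 : ¬ Nonempty (H ≃g (⊤ : SimpleGraph (Fin 5))))
    (r : V) :
    ∀ R ⊆ {e ∈ H.edgeSet | r ∈ e},
      2 * R.ncard ≤
        {f ∈ H.edgeSet | r ∉ f ∧ ∃ e ∈ R, ∃ u : V, u ∈ e ∧ u ≠ r ∧ u ∈ f}.ncard := by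
  intro R hR
  classical
  set N : Set (Sym2 V) :=
    {f ∈ H.edgeSet | r ∉ f ∧ ∃ e ∈ R, ∃ u : V, u ∈ e ∧ u ≠ r ∧ u ∈ f} with hNdef
  set U : Set V := {u | s(r, u) ∈ R} with hUdef
  have hUadj : ∀ u ∈ U, H.Adj r u := by
    intro u hu
    exact (SimpleGraph.mem_edgeSet H).mp (hR hu).1
  have hRimg : R = (fun u => s(r, u)) '' U := by
    ext e
    constructor
    · intro he
      obtain ⟨hE, hre⟩ := hR he
      refine ⟨Sym2.Mem.other hre, ?_, Sym2.other_spec hre⟩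
      show s(r, Sym2.Mem.other hre) ∈ R
      rw [Sym2.other_spec hre]
      exact he
    · rintro ⟨u, hu, rfl⟩
      exact hu
  have hcardRU : R.ncard = U.ncard := by
    rw [hRimg, Set.ncard_image_of_injOn (fun u _ v _ h => Sym2.congr_right.mp h)]
  have hEusub : ∀ u ∈ U, Eu H r u ⊆ N := by
    rintro u hu f ⟨hf, hrf, huf⟩
    exact ⟨hf, hrf, s(r, u), hu, u, Sym2.mem_mk_right _ _, (hUadj u hu).ne', huf⟩
  have hNfin : N.Finite := Set.toFinite _
  have hUle : U.ncard ≤ 4 := by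
    have hdeg4 : (H.neighborSet r).ncard = 4 := by
      rw [Set.ncard_eq_toFinset_card']
      exact hreg r
    calc U.ncard ≤ (H.neighborSet r).ncard :=
          Set.ncard_le_ncard (fun u hu => hUadj u hu) (Set.toFinite _)
      _ = 4 := hdeg4
  rw [hcardRU]
  have hk : U.ncard = 0 ∨ U.ncard = 1 ∨ U.ncard = 2 ∨ U.ncard = 3 ∨ U.ncard = 4 := by omega
  rcases hk with hk | hk | hk | hk | hk
  · rw [hk]
    simp
  · -- one vertex
    obtain ⟨a, hUeq⟩ := Set.ncard_eq_one.mp hk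
    have haU : a ∈ U := by rw [hUeq]; simp
    have hEa := Eu_ncard H (hreg a) (hUadj a haU)
    have hle : (Eu H r a).ncard ≤ N.ncard := Set.ncard_le_ncard (hEusub a haU) hNfin
    omega
  · -- two vertices
    obtain ⟨a, b, hab, hUeq⟩ := Set.ncard_eq_two.mp hk
    have haU : a ∈ U := by rw [hUeq]; simp
    have hbU : b ∈ U := by rw [hUeq]; simp
    have hEa := Eu_ncard H (hreg a) (hUadj a haU)
    have hEb := Eu_ncard H (hreg b) (hUadj b hbU)
    have hun := Set.ncard_union_add_ncard_inter (Eu H r a) (Eu H r b)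
      (Set.toFinite _) (Set.toFinite _)
    have hint := Eu_inter_ncard_le (H := H) (r := r) hab
    have hle : (Eu H r a ∪ Eu H r b).ncard ≤ N.ncard :=
      Set.ncard_le_ncard (Set.union_subset (hEusub a haU) (hEusub b hbU)) hNfin
    omega
  · -- three vertices
    obtain ⟨a, b, c, hab, hac, hbc, hUeq⟩ := Set.ncard_eq_three.mp hk
    have haU : a ∈ U := by rw [hUeq]; simp
    have hbU : b ∈ U := by rw [hUeq]; simp
    have hcU : c ∈ U := by rw [hUeq]; simp
    have hEa := Eu_ncard H (hreg a) (hUadj a haU)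
    have hEb := Eu_ncard H (hreg b) (hUadj b hbU)
    have hEc := Eu_ncard H (hreg c) (hUadj c hcU)
    have hun := bonf3 (Eu H r a) (Eu H r b) (Eu H r c)
    have h1 := Eu_inter_ncard_le (H := H) (r := r) hab
    have h2 := Eu_inter_ncard_le (H := H) (r := r) hac
    have h3 := Eu_inter_ncard_le (H := H) (r := r) hbc
    have hle : (Eu H r a ∪ Eu H r b ∪ Eu H r c).ncard ≤ N.ncard :=
      Set.ncard_le_ncard (Set.union_subset (Set.union_subset (hEusub a haU)
        (hEusub b hbU)) (hEusub c hcU)) hNfin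
    omega
  · -- four vertices
    obtain ⟨a, b, c, d, hab, hac, had, hbc, hbd, hcd, hUeq⟩ :=
      ncard_eq_four hk (Set.toFinite _)
    have haU : a ∈ U := by rw [hUeq]; simp
    have hbU : b ∈ U := by rw [hUeq]; simp
    have hcU : c ∈ U := by rw [hUeq]; simp
    have hdU : d ∈ U := by rw [hUeq]; simp
    have hra := hUadj a haU
    have hrb := hUadj b hbU
    have hrc := hUadj c hcU
    have hrd := hUadj d hdU
    have hEa := Eu_ncard H (hreg a) hra
    have hEb := Eu_ncard H (hreg b) hrb
    have hEc := Eu_ncard H (hreg c) hrc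
    have hEd := Eu_ncard H (hreg d) hrd
    have hun := bonf4 (Eu H r a) (Eu H r b) (Eu H r c) (Eu H r d)
    have i1 := Eu_inter_ncard_le (H := H) (r := r) hab
    have i2 := Eu_inter_ncard_le (H := H) (r := r) hac
    have i3 := Eu_inter_ncard_le (H := H) (r := r) had
    have i4 := Eu_inter_ncard_le (H := H) (r := r) hbc
    have i5 := Eu_inter_ncard_le (H := H) (r := r) hbd
    have i6 := Eu_inter_ncard_le (H := H) (r := r) hcd
    have hle : (Eu H r a ∪ Eu H r b ∪ Eu H r c ∪ Eu H r d).ncard ≤ N.ncard :=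
      Set.ncard_le_ncard (Set.union_subset (Set.union_subset (Set.union_subset
        (hEusub a haU) (hEusub b hbU)) (hEusub c hcU)) (hEusub d hdU)) hNfin
    have hadjof : ∀ p q : V, p ≠ q → (Eu H r p ∩ Eu H r q).ncard ≠ 0 → H.Adj p q :=
      fun p q hpq h => adj_of_inter_nonempty hpq (Set.nonempty_of_ncard_ne_zero h)
    rw [hk]
    by_contra hcon
    push_neg at hcon
    -- at least five of the six pairs must then be adjacent
    by_cases e1 : (Eu H r a ∩ Eu H r b).ncard = 0
    · exact key H hreg h4ec hK5 r a b c d hra hrb hrc hrd hab hac had hbc hbd hcd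
        (hadjof a c hac (by omega)) (hadjof a d had (by omega))
        (hadjof b c hbc (by omega)) (hadjof b d hbd (by omega))
        (hadjof c d hcd (by omega))
    by_cases e2 : (Eu H r a ∩ Eu H r c).ncard = 0
    · refine key H hreg h4ec hK5 r a c b d hra hrc hrb hrd hac hab had hbc.symm hcd hbd
        (hadjof a b hab (by omega)) (hadjof a d had (by omega))
        (hadjof c b hbc.symm ?_) (hadjof c d hcd (by omega))
        (hadjof b d hbd (by omega))
      rw [Set.inter_comm]
      omega
    by_cases e3 : (Eu H r a ∩ Eu H r d).ncard = 0
    · refine key H hreg h4ec hK5 r a d b c hra hrd hrb hrc had hab hac hbd.symm hcd.symm hbc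
        (hadjof a b hab (by omega)) (hadjof a c hac (by omega))
        (hadjof d b hbd.symm ?_) (hadjof d c hcd.symm ?_)
        (hadjof b c hbc (by omega)) <;> rw [Set.inter_comm] <;> omega
    by_cases e4 : (Eu H r b ∩ Eu H r c).ncard = 0
    · refine key H hreg h4ec hK5 r b c a d hrb hrc hra hrd hbc hab.symm hbd hac.symm hcd had
        (hadjof b a hab.symm ?_) (hadjof b d hbd (by omega))
        (hadjof c a hac.symm ?_) (hadjof c d hcd (by omega))
        (hadjof a d had (by omega)) <;> rw [Set.inter_comm] <;> omega
    by_cases e5 : (Eu H r b ∩ Eu H r d).ncard = 0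
    · refine key H hreg h4ec hK5 r b d a c hrb hrd hra hrc hbd hab.symm hbc had.symm hcd.symm hac
        (hadjof b a hab.symm ?_) (hadjof b c hbc (by omega))
        (hadjof d a had.symm ?_) (hadjof d c hcd.symm ?_)
        (hadjof a c hac (by omega)) <;> rw [Set.inter_comm] <;> omega
    · refine key H hreg h4ec hK5 r c d a b hrc hrd hra hrb hcd hac.symm hbc.symm had.symm
        hbd.symm hab
        (hadjof c a hac.symm ?_) (hadjof c b hbc.symm ?_)
        (hadjof d a had.symm ?_) (hadjof d b hbd.symm ?_)
        (hadjof a b hab e1) <;> rw [Set.inter_comm] <;> omega
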